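/- arXiv:math/0505241 — 2 statements merged into one kernel-verified Lean document; each statement's English description precedes it below -/
import Mathlib

section
/- Fix 0 < a ≤ b and c ∈ ℝ. For a standard Brownian motion W started at 0, the probability P(min_{a ≤ s ≤ b} W_s ≥ c) is strictly positive. -/
open MeasureTheory ProbabilityTheory
open scoped NNReal ENNReal

/-- A standard one-dimensional Brownian motion started at `0`: continuous paths,
starts at zero, independent Gaussian increments. -/
structure IsStandardBM {Ω : Type*} [MeasurableSpace Ω] (μ : Measure Ω)
    (W : ℝ → Ω → ℝ) : Prop where
  start : ∀ ω, W 0 ω = 0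
  cont : ∀ ω, Continuous fun t => W t ω
  meas : ∀ t, Measurable (W t)
  incr_law : ∀ s t : ℝ, 0 ≤ s → s ≤ t →
    Measure.map (fun ω => W t ω - W s ω) μ = gaussianReal 0 ((t - s).toNNReal)
  indep_incr : ∀ (n : ℕ) (t : Fin (n + 1) → ℝ), (0 ≤ t 0) → Monotone t →
    iIndepFun
      (fun i : Fin n => fun ω => W (t i.succ) ω - W (t i.castSucc) ω) μ

/-- Auxiliary time vector `0, a, v 0, v 1, ..., v (k-1)`. -/
def tfun (a : ℝ) {k : ℕ} (v : Fin k → ℝ) : Fin (k + 2) → ℝ := fun i =>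
  if h0 : (i : ℕ) = 0 then 0
  else if h1 : (i : ℕ) = 1 then a
  else v ⟨(i : ℕ) - 2, by have := i.isLt; omega⟩

lemma tfun_zero (a : ℝ) {k : ℕ} (v : Fin k → ℝ) (i : Fin (k + 2)) (h : (i : ℕ) = 0) :
    tfun a v i = 0 := by
  unfold tfun; rw [dif_pos h]

lemma tfun_one (a : ℝ) {k : ℕ} (v : Fin k → ℝ) (i : Fin (k + 2)) (h : (i : ℕ) = 1) :
    tfun a v i = a := by
  unfold tfun; rw [dif_neg (by omega), dif_pos h]

lemma tfun_val (a : ℝ) {k : ℕ} (v : Fin k → ℝ) (i : Fin (k + 2)) (m : ℕ) (hm : m < k)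
    (h : (i : ℕ) = m + 2) : tfun a v i = v ⟨m, hm⟩ := by
  unfold tfun
  rw [dif_neg (by omega), dif_neg (by omega)]
  have h2 : (i : ℕ) - 2 = m := by omega
  congr 1
  exact Fin.ext h2

lemma tfun_mono (a : ℝ) (ha : 0 ≤ a) {k : ℕ} (v : Fin k → ℝ) (hmono : Monotone v)
    (hav : ∀ i, a ≤ v i) : Monotone (tfun a v) := by
  intro i j hij
  have hij' : (i : ℕ) ≤ (j : ℕ) := hij
  unfold tfun
  split_ifs with h1 h2 h3 h4 h5 h6 h7 h8
  all_goals first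
    | rfl
    | omega
    | exact ha
    | exact le_trans ha (hav _)
    | exact hav _
    | exact hmono (show (⟨(i : ℕ) - 2, _⟩ : Fin k) ≤ ⟨(j : ℕ) - 2, _⟩ by
        simp only [Fin.mk_le_mk]; omega)

/-- Key finite-dimensional independence lemma, sorted version. -/
lemma key_sorted {Ω : Type*} [MeasurableSpace Ω] (μ : Measure Ω) [IsProbabilityMeasure μ]
    (W : ℝ → Ω → ℝ) (hW : IsStandardBM μ W) (a r n : ℝ) (ha : 0 < a) (k : ℕ)
    (v : Fin k → ℝ) (hmono : Monotone v) (hav : ∀ i, a ≤ v i) :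
    μ ((W a ⁻¹' Set.Ici r) ∩ {ω | ∀ i, -n ≤ W (v i) ω - W a ω}) =
      μ (W a ⁻¹' Set.Ici r) * μ {ω | ∀ i, -n ≤ W (v i) ω - W a ω} := by
  classical
  set X : Fin (k + 1) → Ω → ℝ :=
    fun i ω => W (tfun a v i.succ) ω - W (tfun a v i.castSucc) ω with hXdef
  have hIndep : iIndepFun X μ :=
    hW.indep_incr (k + 1) (tfun a v) (le_of_eq (tfun_zero a v 0 rfl).symm)
      (tfun_mono a ha.le v hmono hav)
  have hXmeas : ∀ i, Measurable (X i) := fun i => (hW.meas _).sub (hW.meas _)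
  have hX0 : X 0 = W a := by
    funext ω
    rw [hXdef]
    simp only
    rw [tfun_one a v _ (by simp), tfun_zero a v _ (by simp), hW.start, sub_zero]
  have hsum : ∀ (ω : Ω) (m : ℕ) (hm : m < k),
      ∑ i ∈ Finset.univ.filter (fun i : Fin k => (i : ℕ) ≤ m), X i.succ ω
        = W (v ⟨m, hm⟩) ω - W a ω := by
    intro ω m
    induction m with
    | zero =>
      intro hm
      have hfil : (Finset.univ.filter (fun i : Fin k => (i : ℕ) ≤ 0))
          = {(⟨0, hm⟩ : Fin k)} := by
        ext i
        simp [Fin.ext_iff, Nat.le_zero]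
      rw [hfil, Finset.sum_singleton, hXdef]
      simp only
      rw [tfun_val a v _ 0 hm (by simp), tfun_one a v _ (by simp)]
    | succ m ih =>
      intro hm
      have hm' : m < k := Nat.lt_of_succ_lt hm
      have hfil : (Finset.univ.filter (fun i : Fin k => (i : ℕ) ≤ m + 1))
          = insert (⟨m + 1, hm⟩ : Fin k)
              (Finset.univ.filter (fun i : Fin k => (i : ℕ) ≤ m)) := by
        ext i
        simp only [Finset.mem_filter, Finset.mem_insert, Finset.mem_univ, true_and, Fin.ext_iff]
        omega
      rw [hfil, Finset.sum_insert (by simp), ih hm', hXdef]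
      simp only
      rw [tfun_val a v _ (m + 1) hm (by simp), tfun_val a v _ m hm' (by simp)]
      ring
  have hdisj : Disjoint ({0} : Finset (Fin (k + 1))) (Finset.univ \ {0}) :=
    Finset.disjoint_sdiff
  have hfin := hIndep.indepFun_finset {0} (Finset.univ \ {0}) hdisj hXmeas
  have hind2 : IndepFun (X 0) (fun ω (j : Fin k) => X j.succ ω) μ := by
    have hφ : Measurable (fun x : (↥({0} : Finset (Fin (k + 1))) → ℝ) =>
        x ⟨0, Finset.mem_singleton_self 0⟩) := measurable_pi_apply _
    have hψ : Measurable (fun (x : ↥(Finset.univ \ ({0} : Finset (Fin (k + 1)))) → ℝ)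
        (j : Fin k) => x ⟨j.succ, by simp [Fin.succ_ne_zero]⟩) :=
      measurable_pi_lambda _ fun j => measurable_pi_apply _
    exact hfin.comp hφ hψ
  have hC : {ω | ∀ i, -n ≤ W (v i) ω - W a ω}
      = (fun ω (j : Fin k) => X j.succ ω) ⁻¹'
          {x : Fin k → ℝ | ∀ p : Fin k,
            -n ≤ ∑ i ∈ Finset.univ.filter (fun i : Fin k => (i : ℕ) ≤ (p : ℕ)), x i} := by
    ext ω
    simp only [Set.mem_setOf_eq, Set.mem_preimage]
    refine forall_congr' fun p => ?_
    rw [hsum ω (p : ℕ) p.isLt]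
  have hN : MeasurableSet {x : Fin k → ℝ | ∀ p : Fin k,
      -n ≤ ∑ i ∈ Finset.univ.filter (fun i : Fin k => (i : ℕ) ≤ (p : ℕ)), x i} := by
    have : {x : Fin k → ℝ | ∀ p : Fin k,
        -n ≤ ∑ i ∈ Finset.univ.filter (fun i : Fin k => (i : ℕ) ≤ (p : ℕ)), x i}
        = ⋂ p : Fin k, {x : Fin k → ℝ |
            -n ≤ ∑ i ∈ Finset.univ.filter (fun i : Fin k => (i : ℕ) ≤ (p : ℕ)), x i} := by
      ext x; simp [Set.mem_iInter]
    rw [this]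
    exact MeasurableSet.iInter fun p =>
      measurableSet_le measurable_const
        (Finset.measurable_sum _ fun i _ => measurable_pi_apply i)
  have hAeq : (W a ⁻¹' Set.Ici r) = X 0 ⁻¹' Set.Ici r := by rw [hX0]
  rw [hAeq, hC]
  exact hind2.measure_inter_preimage_eq_mul _ _ measurableSet_Ici hN

/-- Key finite-dimensional independence lemma, general version. -/
lemma key_indep {Ω : Type*} [MeasurableSpace Ω] (μ : Measure Ω) [IsProbabilityMeasure μ]
    (W : ℝ → Ω → ℝ) (hW : IsStandardBM μ W) (a r n : ℝ) (ha : 0 < a) (k : ℕ)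
    (u : Fin k → ℝ) (hu : ∀ i, a ≤ u i) :
    μ ((W a ⁻¹' Set.Ici r) ∩ {ω | ∀ i, -n ≤ W (u i) ω - W a ω}) =
      μ (W a ⁻¹' Set.Ici r) * μ {ω | ∀ i, -n ≤ W (u i) ω - W a ω} := by
  classical
  have hv : {ω | ∀ i, -n ≤ W (u i) ω - W a ω}
      = {ω | ∀ i, -n ≤ W ((u ∘ Tuple.sort u) i) ω - W a ω} := by
    ext ω
    simp only [Set.mem_setOf_eq, Function.comp]
    constructor
    · intro h i; exact h _
    · intro h i
      have := h ((Tuple.sort u).symm i)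
      simpa using this
  rw [hv]
  exact key_sorted μ W hW a r n ha k (u ∘ Tuple.sort u) (Tuple.monotone_sort u)
    (fun i => hu _)

/-- For `0 < a ≤ b` and `c ∈ ℝ`,
`P(min_{a ≤ s ≤ b} W_s ≥ c) > 0` for a standard Brownian motion `W`. -/
theorem stmt_8 {Ω : Type*} [MeasurableSpace Ω] (μ : Measure Ω) [IsProbabilityMeasure μ]
    (W : ℝ → Ω → ℝ) (hW : IsStandardBM μ W) (a b c : ℝ) (ha : 0 < a) (hab : a ≤ b) :
    0 < μ {ω | ∀ s ∈ Set.Icc a b, c ≤ W s ω} := by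
  classical
  -- a sequence whose range is dense in [a,b]
  obtain ⟨e, he⟩ := exists_surjective_nat ℚ
  set d : ℕ → ℝ := fun j => max a (min b ((e j : ℚ) : ℝ)) with hd
  have hd_mem : ∀ j, d j ∈ Set.Icc a b := fun j =>
    ⟨le_max_left _ _, max_le hab (min_le_left _ _)⟩
  have hd_dense : ∀ s ∈ Set.Icc a b, s ∈ closure (Set.range d) := by
    intro s hs
    rw [Metric.mem_closure_iff]
    intro ε hε
    obtain ⟨q, hq⟩ := exists_rat_near s hε
    obtain ⟨j, rfl⟩ := he q
    refine ⟨d j, ⟨j, rfl⟩, ?_⟩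
    have hdq : d j = max a (min b ((e j : ℚ) : ℝ)) := by rw [hd]
    have hq' := abs_sub_lt_iff.mp hq
    rw [Real.dist_eq, hdq]
    set q : ℚ := e j
    rcases le_total ((q : ℝ)) a with h | h
    · rw [min_eq_right (h.trans hab), max_eq_left h, abs_sub_lt_iff]
      exact ⟨by linarith [hs.1], by linarith [hs.1]⟩
    · rcases le_total ((q : ℝ)) b with h2 | h2
      · rw [min_eq_right h2, max_eq_right h, abs_sub_lt_iff]
        exact hq'
      · rw [min_eq_left h2, max_eq_right hab, abs_sub_lt_iff]
        exact ⟨by linarith [hs.2], by linarith [hs.2]⟩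
  -- the events B n : increments stay above -n on [a,b]
  set Bset : ℕ → Set Ω := fun n => {ω | ∀ s ∈ Set.Icc a b, -(n : ℝ) ≤ W s ω - W a ω}
    with hBset
  have hBunion : (⋃ n, Bset n) = Set.univ := by
    ext ω
    simp only [Set.mem_iUnion, Set.mem_univ, iff_true]
    have hcont : ContinuousOn (fun s => W s ω - W a ω) (Set.Icc a b) :=
      ((hW.cont ω).sub continuous_const).continuousOn
    obtain ⟨x, hx, hxmin⟩ := isCompact_Icc.exists_isMinOn
      ⟨a, Set.left_mem_Icc.mpr hab⟩ hcont
    obtain ⟨n, hn⟩ := exists_nat_ge (-(W x ω - W a ω))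
    refine ⟨n, fun s hs => ?_⟩
    have h1 : W x ω - W a ω ≤ W s ω - W a ω := hxmin hs
    linarith
  have hBn : ∃ n, μ (Bset n) ≠ 0 := by
    by_contra h
    push_neg at h
    have h0 : μ (⋃ n, Bset n) = 0 := measure_iUnion_null h
    rw [hBunion, measure_univ] at h0
    exact one_ne_zero h0
  obtain ⟨n, hBn0⟩ := hBn
  -- the event A : W a is large
  set A : Set Ω := W a ⁻¹' Set.Ici (c + n) with hAdef
  have hmap : Measure.map (W a) μ = gaussianReal 0 (Real.toNNReal a) := by
    have h := hW.incr_law 0 a le_rfl ha.le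
    have heq : (fun ω => W a ω - W 0 ω) = W a := funext fun ω => by
      rw [hW.start, sub_zero]
    rw [heq, sub_zero] at h
    exact h
  have hA0 : μ A ≠ 0 := by
    have hAg : μ A = gaussianReal 0 (Real.toNNReal a) (Set.Ici (c + n)) := by
      rw [← hmap, Measure.map_apply (hW.meas a) measurableSet_Ici]
    rw [hAg]
    intro h
    have hvne : (Real.toNNReal a) ≠ 0 := (Real.toNNReal_pos.mpr ha).ne'
    have hvol := gaussianReal_absolutelyContinuous' 0 hvne h
    rw [Real.volume_Ici] at hvol
    exact ENNReal.top_ne_zero hvol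
  -- the finite approximating events
  set C : ℕ → Set Ω := fun k => {ω | ∀ i : Fin k, -(n : ℝ) ≤ W (d i) ω - W a ω} with hCdef
  have hkey : ∀ k, μ (A ∩ C k) = μ A * μ (C k) := fun k =>
    key_indep μ W hW a (c + n) n ha k (fun i : Fin k => d i) (fun i => (hd_mem i).1)
  have hBsubC : ∀ k, Bset n ⊆ C k := fun k ω hω i => hω (d i) (hd_mem i)
  have hCB : (⋂ k, C k) ⊆ Bset n := by
    intro ω hω s hs
    have hcont : Continuous (fun x => W x ω - W a ω) := (hW.cont ω).sub continuous_const
    have hclosed : IsClosed {x | -(n : ℝ) ≤ W x ω - W a ω} :=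
      isClosed_le continuous_const hcont
    have hrange : Set.range d ⊆ {x | -(n : ℝ) ≤ W x ω - W a ω} := by
      rintro _ ⟨j, rfl⟩
      have hmem := Set.mem_iInter.mp hω (j + 1)
      exact hmem ⟨j, Nat.lt_succ_self j⟩
    exact closure_minimal hrange hclosed (hd_dense s hs)
  have hmeas : ∀ k, MeasurableSet (A ∩ C k) := by
    intro k
    refine ((hW.meas a) measurableSet_Ici).inter ?_
    have hCk : C k = ⋂ i : Fin k, {ω | -(n : ℝ) ≤ W (d i) ω - W a ω} := by
      ext ω; simp [hCdef, Set.mem_iInter]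
    rw [hCk]
    exact MeasurableSet.iInter fun i =>
      measurableSet_le measurable_const ((hW.meas _).sub (hW.meas _))
  have hanti : Antitone (fun k => A ∩ C k) := by
    intro k1 k2 h
    refine Set.inter_subset_inter_right _ ?_
    intro ω hω i
    exact hω ⟨(i : ℕ), lt_of_lt_of_le i.isLt h⟩
  have htend : Filter.Tendsto (fun k => μ (A ∩ C k)) Filter.atTop
      (nhds (μ (⋂ k, A ∩ C k))) :=
    tendsto_measure_iInter_atTop (fun k => (hmeas k).nullMeasurableSet) hanti
      ⟨0, measure_ne_top μ _⟩
  have hlb : ∀ k, μ A * μ (Bset n) ≤ μ (A ∩ C k) := by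
    intro k
    rw [hkey k]
    exact mul_le_mul_right (measure_mono (hBsubC k)) _
  have hpos : 0 < μ A * μ (Bset n) := ENNReal.mul_pos hA0 hBn0
  have hfinal : μ A * μ (Bset n) ≤ μ (⋂ k, A ∩ C k) :=
    ge_of_tendsto htend (Filter.Eventually.of_forall hlb)
  refine lt_of_lt_of_le hpos (le_trans hfinal (measure_mono ?_))
  intro ω hω
  have hωA : ω ∈ A := (Set.mem_iInter.mp hω 0).1
  have hωC : ω ∈ ⋂ k, C k := Set.mem_iInter.mpr fun k => (Set.mem_iInter.mp hω k).2
  have hωB := hCB hωC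
  intro s hs
  have h1 : -(n : ℝ) ≤ W s ω - W a ω := hωB s hs
  have h2 : c + n ≤ W a ω := hωA
  linarith
end

section
/- Let f : [0,∞) → ℝ be continuous on [a,M] with 0 < a < M < ∞, and let g : [0,1] → ℝ be continuous and bounded. Then lim_{h→0+} ∫_a^M f(s) g(s/h − ⌊s/h⌋) ds = (∫_a^M f(s) ds) · (∫₀¹ g(u) du). -/
open MeasureTheory Filter intervalIntegral Set

/-- A measurable, globally bounded function is interval integrable on any interval. -/
private lemma aux_intInt {φ : ℝ → ℝ} (hm : Measurable φ) {D : ℝ} (hb : ∀ s, |φ s| ≤ D)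
    (u v : ℝ) : IntervalIntegrable φ volume u v := by
  have key : ∀ p q : ℝ, IntegrableOn φ (Ioc p q) volume := by
    intro p q
    refine Integrable.mono' (g := fun _ => D)
      ((MeasureTheory.integrableOn_const_iff).mpr (Or.inr measure_Ioc_lt_top))
      hm.aestronglyMeasurable (ae_of_all _ fun s => ?_)
    simpa [Real.norm_eq_abs] using hb s
  exact ⟨key u v, key v u⟩

/-- Key oscillation estimate: the integral of a bounded periodic function over any interval
differs from (length · mean) by at most `4*C*h` after rescaling. -/
private lemma key_bound {C : ℝ} {G : ℝ → ℝ} (hGm : Measurable G) (hGb : ∀ t, |G t| ≤ C)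
    (hGp : Function.Periodic G 1) {h : ℝ} (hh : 0 < h) (x y : ℝ) :
    |(∫ σ in x..y, G (σ / h)) - (y - x) * ∫ u in (0:ℝ)..1, G u| ≤ 4 * C * h := by
  set μ := ∫ u in (0:ℝ)..1, G u with hμdef
  have hC : 0 ≤ C := le_trans (abs_nonneg _) (hGb 0)
  have hμb : |μ| ≤ C := by
    have := intervalIntegral.norm_integral_le_of_norm_le_const
      (f := G) (a := (0:ℝ)) (b := 1) (C := C) (fun t _ => by simpa using hGb t)
    simpa [Real.norm_eq_abs] using this
  set H : ℝ → ℝ := fun t => (∫ u in (0:ℝ)..t, G u) - t * μ with hHdef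
  have hint : ∀ u v : ℝ, IntervalIntegrable G volume u v := aux_intInt hGm hGb
  have hHp : Function.Periodic H 1 := by
    intro t
    have h1 : (∫ u in (0:ℝ)..t + 1, G u) = (∫ u in (0:ℝ)..t, G u) + ∫ u in t..t + 1, G u :=
      (intervalIntegral.integral_add_adjacent_intervals (hint 0 t) (hint t (t + 1))).symm
    have h2 : (∫ u in t..t + 1, G u) = μ := by
      simpa using hGp.intervalIntegral_add_eq t 0
    simp only [hHdef, h1, h2]; ring
  have hHb1 : ∀ t ∈ Icc (0:ℝ) 1, |H t| ≤ 2 * C := by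
    intro t ht
    have h1 : |∫ u in (0:ℝ)..t, G u| ≤ C := by
      have := intervalIntegral.norm_integral_le_of_norm_le_const
        (f := G) (a := (0:ℝ)) (b := t) (C := C) (fun s _ => by simpa using hGb s)
      have ht1 : |t - 0| ≤ 1 := by rw [sub_zero, abs_of_nonneg ht.1]; exact ht.2
      calc |∫ u in (0:ℝ)..t, G u| ≤ C * |t - 0| := by simpa [Real.norm_eq_abs] using this
        _ ≤ C * 1 := by nlinarith
        _ = C := mul_one C
    have h2 : |t * μ| ≤ C := by
      rw [abs_mul]
      calc |t| * |μ| ≤ 1 * C := by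
            apply mul_le_mul _ hμb (abs_nonneg _) zero_le_one
            rw [abs_of_nonneg ht.1]; exact ht.2
        _ = C := one_mul C
    calc |H t| ≤ |∫ u in (0:ℝ)..t, G u| + |t * μ| := abs_sub _ _
      _ ≤ C + C := add_le_add h1 h2
      _ = 2 * C := by ring
  have hHb : ∀ t, |H t| ≤ 2 * C := by
    intro t
    have hfr : H (Int.fract t) = H t := by
      have h5 := hHp.sub_int_mul_eq (x := t) ⌊t⌋
      rw [mul_one, Int.self_sub_floor] at h5
      exact h5
    rw [← hfr]
    exact hHb1 _ ⟨Int.fract_nonneg t, (Int.fract_lt_one t).le⟩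
  have hsub : (∫ σ in x..y, G (σ / h)) = h * ∫ t in x / h..y / h, G t := by
    rw [intervalIntegral.integral_comp_div (f := G) (ne_of_gt hh)]
    simp [smul_eq_mul]
  have hkey : (∫ σ in x..y, G (σ / h)) - (y - x) * μ = h * (H (y / h) - H (x / h)) := by
    rw [hsub]
    have h3 : (∫ t in x / h..y / h, G t)
        = (∫ u in (0:ℝ)..y / h, G u) - ∫ u in (0:ℝ)..x / h, G u :=
      (intervalIntegral.integral_interval_sub_left (hint 0 (y / h)) (hint 0 (x / h))).symm
    have h4 : y - x = h * (y / h - x / h) := by field_simp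
    rw [h3, h4]
    simp only [hHdef]
    ring
  rw [hkey, abs_mul, abs_of_pos hh]
  have : |H (y / h) - H (x / h)| ≤ 4 * C := by
    calc |H (y / h) - H (x / h)| ≤ |H (y / h)| + |H (x / h)| := abs_sub _ _
      _ ≤ 2 * C + 2 * C := add_le_add (hHb _) (hHb _)
      _ = 4 * C := by ring
  calc h * |H (y / h) - H (x / h)| ≤ h * (4 * C) := by nlinarith
    _ = 4 * C * h := by ring

set_option maxHeartbeats 1000000 in
/-- Equidistribution of fractional parts: if `f` is continuous on `[a,M]`
(`0 < a < M`) and `g` is continuous and bounded on `[0,1]`, then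
`∫_a^M f(s) g({s/h}) ds → (∫_a^M f) (∫₀¹ g)` as `h → 0⁺`, where `{x} = x − ⌊x⌋`. -/
theorem stmt_10 (a M : ℝ) (ha : 0 < a) (haM : a < M) (f g : ℝ → ℝ)
    (hf : ContinuousOn f (Set.Icc a M))
    (hg : ContinuousOn g (Set.Icc 0 1)) (C : ℝ) (hgb : ∀ u ∈ Set.Icc (0:ℝ) 1, |g u| ≤ C) :
    Tendsto (fun h : ℝ => ∫ s in a..M, f s * g (Int.fract (s / h)))
      (nhdsWithin 0 (Set.Ioi 0))
      (nhds ((∫ s in a..M, f s) * ∫ u in (0:ℝ)..1, g u)) := by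
  have hC : 0 ≤ C := le_trans (abs_nonneg _) (hgb 0 ⟨le_refl _, zero_le_one⟩)
  -- globally defined versions
  set g' : ℝ → ℝ := IccExtend zero_le_one ((Icc (0:ℝ) 1).restrict g) with hg'def
  have hg'c : Continuous g' := (hg.restrict).Icc_extend'
  have hg'g : ∀ u ∈ Icc (0:ℝ) 1, g' u = g u := fun u hu => IccExtend_of_mem _ _ hu
  set G : ℝ → ℝ := fun t => g' (Int.fract t) with hGdef
  have hGg : ∀ t, G t = g (Int.fract t) := fun t =>
    hg'g _ ⟨Int.fract_nonneg t, (Int.fract_lt_one t).le⟩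
  have hGm : Measurable G := hg'c.measurable.comp measurable_fract
  have hGb : ∀ t, |G t| ≤ C := fun t => by
    rw [hGg t]; exact hgb _ ⟨Int.fract_nonneg t, (Int.fract_lt_one t).le⟩
  have hGp : Function.Periodic G 1 := fun t => by
    simp only [hGdef, Int.fract_add_one]
  set F : ℝ → ℝ := IccExtend haM.le ((Icc a M).restrict f) with hFdef
  have hFc : Continuous F := (hf.restrict).Icc_extend'
  have hFf : ∀ s ∈ Icc a M, F s = f s := fun s hs => IccExtend_of_mem _ _ hs
  obtain ⟨B, hB⟩ := isCompact_Icc.exists_bound_of_continuousOn hf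
  have hBnn : 0 ≤ B := le_trans (norm_nonneg _) (hB a ⟨le_refl _, haM.le⟩)
  have hFB : ∀ s, |F s| ≤ B := by
    intro s
    have : F s = f (projIcc a M haM.le s) := rfl
    rw [this]
    exact hB _ (projIcc a M haM.le s).2
  set μ := ∫ u in (0:ℝ)..1, G u with hμdef
  have hμg : μ = ∫ u in (0:ℝ)..1, g u := by
    apply intervalIntegral.integral_congr_ae
    have h1 : ∀ᵐ t : ℝ, t ≠ 1 := by
      rw [ae_iff]
      simp only [ne_eq, not_not, setOf_eq_eq_singleton]
      exact measure_singleton 1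
    filter_upwards [h1] with t ht htI
    rw [Set.uIoc_of_le zero_le_one] at htI
    have htIco : t ∈ Ico (0:ℝ) 1 := ⟨htI.1.le, lt_of_le_of_ne htI.2 ht⟩
    rw [hGg t, Int.fract_eq_self.mpr ⟨htIco.1, htIco.2⟩]
  have hμb : |μ| ≤ C := by
    have := intervalIntegral.norm_integral_le_of_norm_le_const
      (f := G) (a := (0:ℝ)) (b := 1) (C := C) (fun t _ => by simpa using hGb t)
    simpa [Real.norm_eq_abs] using this
  -- replace f, g by F, G in the statement
  have heq : ∀ h : ℝ, (∫ s in a..M, f s * g (Int.fract (s / h)))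
      = ∫ s in a..M, F s * G (s / h) := by
    intro h
    apply intervalIntegral.integral_congr
    intro s hs
    rw [uIcc_of_le haM.le] at hs
    show f s * g (Int.fract (s / h)) = F s * G (s / h)
    rw [hFf s hs, hGg (s / h)]
  have heqf : (∫ s in a..M, f s) = ∫ s in a..M, F s :=
    intervalIntegral.integral_congr fun s hs =>
      (hFf s (by rwa [uIcc_of_le haM.le] at hs)).symm
  simp only [heq, heqf, ← hμg]
  -- now the main estimate
  rw [Metric.tendsto_nhdsWithin_nhds]
  intro ε hε
  -- uniform continuity of F on [a, M]
  have hUC := (Metric.uniformContinuousOn_iff.mp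
    (isCompact_Icc.uniformContinuousOn_of_continuous (s := Icc a M) hFc.continuousOn))
  set ε₁ := ε / (2 * (2 * C * (M - a) + 1)) with hε₁def
  have hden : 0 < 2 * C * (M - a) + 1 := by nlinarith
  have hε₁ : 0 < ε₁ := by positivity
  obtain ⟨δ₀, hδ₀, hδ₀p⟩ := hUC ε₁ hε₁
  set N : ℕ := ⌈(M - a) / δ₀⌉₊ + 1 with hNdef
  have hN0 : 0 < N := Nat.succ_pos _
  have hNR : (0:ℝ) < N := by exact_mod_cast hN0
  set Δ : ℝ := (M - a) / N with hΔdef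
  have hΔpos : 0 < Δ := div_pos (by linarith) hNR
  have hΔδ₀ : Δ < δ₀ := by
    rw [hΔdef, div_lt_iff₀ hNR]
    have h1 : (M - a) / δ₀ < N := by
      calc (M - a) / δ₀ ≤ ⌈(M - a) / δ₀⌉₊ := Nat.le_ceil _
        _ < N := by exact_mod_cast Nat.lt_succ_self _
    calc M - a = (M - a) / δ₀ * δ₀ := by field_simp
      _ < N * δ₀ := by apply mul_lt_mul_of_pos_right h1 hδ₀
      _ = δ₀ * N := mul_comm _ _
  set K : ℝ := N * B * (4 * C) with hKdef
  have hKnn : 0 ≤ K := by positivity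
  refine ⟨ε / (2 * (K + 1)), by positivity, ?_⟩
  intro h hhmem hhd
  have hh : 0 < h := hhmem
  rw [Real.dist_eq, sub_zero, abs_of_pos hh] at hhd
  rw [Real.dist_eq]
  -- partition points
  set x : ℕ → ℝ := fun i => a + i * Δ with hxdef
  have hx0 : x 0 = a := by simp [hxdef]
  have hxN : x N = M := by
    simp only [hxdef, hΔdef]
    field_simp
    ring
  have hxmono : ∀ i : ℕ, x i < x (i + 1) := by
    intro i
    simp only [hxdef]
    push_cast
    nlinarith
  have hxmem : ∀ i : ℕ, i ≤ N → x i ∈ Icc a M := by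
    intro i hi
    constructor
    · have h9 : 0 ≤ (i:ℝ) * Δ := by positivity
      simp only [hxdef]; linarith
    · have : (i : ℝ) ≤ N := by exact_mod_cast hi
      have h2 : (i:ℝ) * Δ ≤ N * Δ := by nlinarith
      have h3 : (N:ℝ) * Δ = M - a := by
        rw [hΔdef]; field_simp
      simp only [hxdef]; linarith
  -- integrand
  have hGhm : Measurable fun s : ℝ => G (s / h) := hGm.comp (measurable_id.div_const h)
  have hGμb : ∀ s : ℝ, |G (s / h) - μ| ≤ 2 * C := by
    intro s
    calc |G (s / h) - μ| ≤ |G (s / h)| + |μ| := abs_sub _ _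
      _ ≤ C + C := add_le_add (hGb _) hμb
      _ = 2 * C := by ring
  set ψ : ℝ → ℝ := fun s => F s * (G (s / h) - μ) with hψdef
  have hψm : Measurable ψ := hFc.measurable.mul (hGhm.sub measurable_const)
  have hψb : ∀ s, |ψ s| ≤ B * (2 * C) := by
    intro s
    rw [hψdef, abs_mul]
    exact mul_le_mul (hFB s) (hGμb s) (abs_nonneg _) hBnn
  have hψint : ∀ u v : ℝ, IntervalIntegrable ψ volume u v := aux_intInt hψm hψb
  have hGhint : ∀ u v : ℝ, IntervalIntegrable (fun s => G (s / h)) volume u v :=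
    aux_intInt hGhm (fun s => hGb (s / h))
  -- the difference equals the integral of ψ
  have hdiff : (∫ s in a..M, F s * G (s / h)) - (∫ s in a..M, F s) * μ
      = ∫ s in a..M, ψ s := by
    have hFGint : IntervalIntegrable (fun s => F s * G (s / h)) volume a M :=
      aux_intInt (hFc.measurable.mul hGhm) (D := B * C) (fun s => by
        show |F s * G (s / h)| ≤ _
        rw [abs_mul]
        exact mul_le_mul (hFB s) (hGb _) (abs_nonneg _) hBnn) a M
    rw [← intervalIntegral.integral_mul_const,
      ← intervalIntegral.integral_sub hFGint ((hFc.intervalIntegrable a M).mul_const μ)]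
    apply intervalIntegral.integral_congr
    intro s _
    show F s * G (s / h) - F s * μ = ψ s
    simp only [hψdef]
    ring
  -- key per-interval bound for ∫ (G(s/h) - μ)
  have hkey : ∀ u v : ℝ, |∫ s in u..v, (G (s / h) - μ)| ≤ 4 * C * h := by
    intro u v
    have h1 : (∫ s in u..v, (G (s / h) - μ))
        = (∫ s in u..v, G (s / h)) - (v - u) * μ := by
      rw [intervalIntegral.integral_sub (hGhint u v) (intervalIntegrable_const)]
      simp [smul_eq_mul]
    rw [h1]
    exact key_bound hGm hGb hGp hh u v
  -- per-piece estimate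
  have hpiece : ∀ i : ℕ, i < N →
      |∫ s in x i..x (i + 1), ψ s| ≤ ε₁ * (2 * C) * Δ + B * (4 * C * h) := by
    intro i hi
    have hxi : x i ∈ Icc a M := hxmem i hi.le
    have hxi1 : x (i + 1) ∈ Icc a M := hxmem (i + 1) hi
    have hsplit : (∫ s in x i..x (i + 1), ψ s)
        = (∫ s in x i..x (i + 1), (F s - F (x i)) * (G (s / h) - μ))
          + F (x i) * ∫ s in x i..x (i + 1), (G (s / h) - μ) := by
      have hint1 : IntervalIntegrable (fun s => (F s - F (x i)) * (G (s / h) - μ))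
          volume (x i) (x (i + 1)) :=
        aux_intInt ((hFc.measurable.sub measurable_const).mul (hGhm.sub measurable_const))
          (D := (B + B) * (2 * C)) (fun s => by
            show |(F s - F (x i)) * (G (s / h) - μ)| ≤ _
            rw [abs_mul]
            apply mul_le_mul _ (hGμb s) (abs_nonneg _) (by positivity)
            calc |F s - F (x i)| ≤ |F s| + |F (x i)| := abs_sub _ _
              _ ≤ B + B := add_le_add (hFB _) (hFB _)) _ _
      have hint2 : IntervalIntegrable (fun s => F (x i) * (G (s / h) - μ))
          volume (x i) (x (i + 1)) :=
        aux_intInt (measurable_const.mul (hGhm.sub measurable_const))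
          (D := |F (x i)| * (2 * C)) (fun s => by
            show |F (x i) * (G (s / h) - μ)| ≤ _
            rw [abs_mul]
            exact mul_le_mul le_rfl (hGμb s) (abs_nonneg _) (abs_nonneg _)) _ _
      rw [← intervalIntegral.integral_const_mul,
        ← intervalIntegral.integral_add hint1 hint2]
      apply intervalIntegral.integral_congr
      intro s _
      show ψ s = (F s - F (x i)) * (G (s / h) - μ) + F (x i) * (G (s / h) - μ)
      simp only [hψdef]
      ring
    rw [hsplit]
    have hb1 : |∫ s in x i..x (i + 1), (F s - F (x i)) * (G (s / h) - μ)|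
        ≤ ε₁ * (2 * C) * Δ := by
      have := intervalIntegral.norm_integral_le_of_norm_le_const
        (f := fun s => (F s - F (x i)) * (G (s / h) - μ))
        (a := x i) (b := x (i + 1)) (C := ε₁ * (2 * C)) ?_
      · have hff : |x (i + 1) - x i| = Δ := by
          simp only [hxdef]
          push_cast
          rw [show a + (↑i + 1) * Δ - (a + ↑i * Δ) = Δ by ring]
          exact abs_of_pos hΔpos
        calc |∫ s in x i..x (i + 1), (F s - F (x i)) * (G (s / h) - μ)|
            ≤ ε₁ * (2 * C) * |x (i + 1) - x i| := by simpa [Real.norm_eq_abs] using this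
          _ = ε₁ * (2 * C) * Δ := by rw [hff]
      · intro s hs
        rw [Set.uIoc_of_le (hxmono i).le] at hs
        have hsmem : s ∈ Icc a M := ⟨hxi.1.trans hs.1.le, hs.2.trans hxi1.2⟩
        have hdist : dist s (x i) < δ₀ := by
          rw [Real.dist_eq, abs_of_pos (sub_pos.mpr hs.1)]
          have : s - x i ≤ Δ := by
            have := hs.2
            simp only [hxdef] at this ⊢
            push_cast at this
            linarith
          linarith
        have hFs : |F s - F (x i)| ≤ ε₁ := by
          have := hδ₀p s hsmem (x i) hxi hdist
          rw [Real.dist_eq] at this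
          exact this.le
        rw [Real.norm_eq_abs, abs_mul]
        apply mul_le_mul hFs _ (abs_nonneg _) hε₁.le
        calc |G (s / h) - μ| ≤ |G (s / h)| + |μ| := abs_sub _ _
          _ ≤ C + C := add_le_add (hGb _) hμb
          _ = 2 * C := by ring
    have hb2 : |F (x i) * ∫ s in x i..x (i + 1), (G (s / h) - μ)| ≤ B * (4 * C * h) := by
      rw [abs_mul]
      exact mul_le_mul (hFB _) (hkey _ _) (abs_nonneg _) hBnn
    calc |(∫ s in x i..x (i + 1), (F s - F (x i)) * (G (s / h) - μ))
          + F (x i) * ∫ s in x i..x (i + 1), (G (s / h) - μ)|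
        ≤ |∫ s in x i..x (i + 1), (F s - F (x i)) * (G (s / h) - μ)|
          + |F (x i) * ∫ s in x i..x (i + 1), (G (s / h) - μ)| := abs_add_le _ _
      _ ≤ ε₁ * (2 * C) * Δ + B * (4 * C * h) := add_le_add hb1 hb2
  -- sum up
  have hsum : (∫ s in a..M, ψ s) = ∑ i ∈ Finset.range N, ∫ s in x i..x (i + 1), ψ s := by
    rw [intervalIntegral.sum_integral_adjacent_intervals (fun k _ => hψint _ _), hx0, hxN]
  have htotal : |∫ s in a..M, ψ s| ≤ N * (ε₁ * (2 * C) * Δ + B * (4 * C * h)) := by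
    rw [hsum]
    calc |∑ i ∈ Finset.range N, ∫ s in x i..x (i + 1), ψ s|
        ≤ ∑ i ∈ Finset.range N, |∫ s in x i..x (i + 1), ψ s| :=
          Finset.abs_sum_le_sum_abs _ _
      _ ≤ ∑ i ∈ Finset.range N, (ε₁ * (2 * C) * Δ + B * (4 * C * h)) :=
          Finset.sum_le_sum fun i hi => hpiece i (Finset.mem_range.mp hi)
      _ = N * (ε₁ * (2 * C) * Δ + B * (4 * C * h)) := by
          rw [Finset.sum_const, Finset.card_range, nsmul_eq_mul]
  have hNΔ : (N:ℝ) * Δ = M - a := by rw [hΔdef]; field_simp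
  have hfinal : |∫ s in a..M, ψ s| < ε := by
    have h1 : (N:ℝ) * (ε₁ * (2 * C) * Δ) = ε₁ * (2 * C * (M - a)) := by
      rw [show (N:ℝ) * (ε₁ * (2 * C) * Δ) = ε₁ * (2 * C) * ((N:ℝ) * Δ) by ring, hNΔ]; ring
    have h2 : ε₁ * (2 * C * (M - a)) ≤ ε / 2 := by
      rw [hε₁def]
      rw [div_mul_eq_mul_div, div_le_div_iff₀ (by positivity) (by norm_num)]
      nlinarith
    have h3 : (N:ℝ) * (B * (4 * C * h)) = K * h := by rw [hKdef]; ring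
    have h4 : K * h < ε / 2 := by
      calc K * h ≤ (K + 1) * h := by nlinarith
        _ < (K + 1) * (ε / (2 * (K + 1))) := by
            apply mul_lt_mul_of_pos_left hhd (by positivity)
        _ = ε / 2 := by field_simp
    calc |∫ s in a..M, ψ s| ≤ N * (ε₁ * (2 * C) * Δ + B * (4 * C * h)) := htotal
      _ = ε₁ * (2 * C * (M - a)) + K * h := by rw [mul_add, h1, h3]
      _ < ε / 2 + ε / 2 := by linarith
      _ = ε := by ring
  rw [hdiff]
  exact hfinal
end
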